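/- Let G = (V,E) be a finite simple graph and let s be a positive integer. Suppose V is partitioned into pairwise disjoint sets X, C_1, …, C_k with |C_i| ≤ s for each i ∈ [k], and let b be the number of edges of G whose two endpoints lie in two distinct sets C_i and C_j (i ≠ j). Then there exists a set X' ⊆ V with |X'| ≤ |X| + b such that every connected component of the subgraph of G induced on V ∖ X' has at most s vertices. -/
import Mathlib


/-- `u` and `v` are connected in `G` by a walk all of whose vertices avoid `X`. -/
def ReachAvoiding {V : Type*} (G : SimpleGraph V) (X : Set V) (u v : V) : Prop :=
  ∃ p : G.Walk u v, ∀ t ∈ p.support, t ∉ X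

/-- Corollary 7.3: a vertex partition `X, C_1, …, C_k` into parts of size at most `sz` with
`b` crossing edges can be converted into a vertex set `X'` of size at most `|X| + b` whose
removal leaves only connected components of size at most `sz`. -/
theorem partition_to_separator
    {V : Type*} [Fintype V] [DecidableEq V] (G : SimpleGraph V) (sz : ℕ) (hsz : 0 < sz)
    (k : ℕ) (X : Finset V) (C : Fin k → Finset V)
    (hCsize : ∀ i, (C i).card ≤ sz)
    (hCdisj : ∀ i j, i ≠ j → Disjoint (C i) (C j))
    (hXdisj : ∀ i, Disjoint X (C i))
    (hcover : ∀ v : V, v ∈ X ∨ ∃ i, v ∈ C i)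
    (b : ℕ)
    (hb : b = {e ∈ G.edgeSet |
        ∃ u v : V, e = s(u, v) ∧ ∃ i j, i ≠ j ∧ u ∈ C i ∧ v ∈ C j}.ncard) :
    ∃ X' : Finset V, X'.card ≤ X.card + b ∧
      ∀ v : V, v ∉ X' →
        ({u | ReachAvoiding G (↑X' : Set V) u v} : Set V).ncard ≤ sz := by
  classical
  set P : Sym2 V → Prop := fun e =>
    ∃ u v : V, e = s(u, v) ∧ ∃ i j, i ≠ j ∧ u ∈ C i ∧ v ∈ C j with hP
  set F : Finset (Sym2 V) := G.edgeFinset.filter P with hF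
  have hFcoe : (↑F : Set (Sym2 V)) = {e ∈ G.edgeSet | P e} := by
    ext e
    simp [hF, SimpleGraph.mem_edgeFinset]
  have hbF : b = F.card := by
    rw [hb, ← hFcoe, Set.ncard_coe_finset]
  set X' : Finset V := X ∪ F.image (fun e => e.out.1) with hX'
  refine ⟨X', ?_, ?_⟩
  · calc X'.card ≤ X.card + (F.image (fun e => e.out.1)).card := Finset.card_union_le _ _
      _ ≤ X.card + F.card := by gcongr; exact Finset.card_image_le
      _ = X.card + b := by rw [hbF]
  · intro v hv
    -- key lemma: walks avoiding X' stay in one part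
    have key : ∀ u w : V, ReachAvoiding G (↑X' : Set V) u w →
        ∀ i, w ∈ C i → u ∈ C i := by
      intro u w ⟨p, hp⟩ i hw
      induction p with
      | nil => exact hw
      | @cons a c d hadj q ih =>
        have hc : c ∈ C i := ih (fun t ht => hp t (by simp [ht])) hw
        have ha : a ∉ (↑X' : Set V) := hp a (by simp)
        have haX : a ∉ X := fun h => ha (by simp [hX', h])
        obtain (h | ⟨j, hj⟩) := hcover a
        · exact absurd h haX
        rcases eq_or_ne j i with rfl | hji
        · exact hj
        · exfalso
          have hcX' : c ∉ (↑X' : Set V) := hp c (by simp)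
          have he : s(a, c) ∈ F := by
            simp only [hF, Finset.mem_filter, SimpleGraph.mem_edgeFinset]
            exact ⟨hadj, a, c, rfl, j, i, hji, hj, hc⟩
          have hout : (s(a, c) : Sym2 V).out.1 ∈ X' :=
            Finset.mem_union_right _ (Finset.mem_image_of_mem _ he)
          have hmem : (s(a, c) : Sym2 V).out.1 ∈ (s(a, c) : Sym2 V) :=
            Sym2.out_fst_mem _
          rw [Sym2.mem_iff] at hmem
          rcases hmem with h | h
          · exact ha (by rw [h] at hout; exact hout)
          · exact hcX' (by rw [h] at hout; exact hout)
    have hvX : v ∉ X := fun h => hv (by simp [hX', h])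
    obtain (h | ⟨i, hi⟩) := hcover v
    · exact absurd h hvX
    have hsub : ({u | ReachAvoiding G (↑X' : Set V) u v} : Set V) ⊆ ↑(C i) := by
      intro u hu
      exact key u v hu i hi
    calc ({u | ReachAvoiding G (↑X' : Set V) u v} : Set V).ncard
        ≤ (↑(C i) : Set V).ncard := Set.ncard_le_ncard hsub (C i).finite_toSet
      _ = (C i).card := Set.ncard_coe_finset _
      _ ≤ sz := hCsize i
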